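/- Let q be a prime power and let a, b be positive integers with gcd(a,b) = 1. Let H_Y(d) = dim_{F_q} S_d − dim_{F_q} I_d be the Hilbert function of the set Y of F_q-rational points of P(1,a,b). Then the following identity of formal power series in t (with integer coefficients) holds: (1−t)(1−t^a)(1−t^b) · Σ_{d=0}^{∞} H_Y(d) t^d = 1 − t^{qa+1} − t^{qb+1} − t^{(q−1)ab+a+b} + t^{qa+qb+1} + t^{(q−1)ab+a+b+1}. -/

import Mathlib

open MvPolynomial

set_option synthInstance.maxHeartbeats 1000000
set_option maxHeartbeats 1000000

noncomputable section

variable (F : Type) [Field F] [Fintype F]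

/-- The submodule of polynomials vanishing at every nonzero point of `F³`. -/
def vanishing : Submodule F (MvPolynomial (Fin 3) F) where
  carrier := {f | ∀ y : Fin 3 → F, y ≠ 0 → eval y f = 0}
  add_mem' := fun hf hg y hy => by simp [hf y hy, hg y hy]
  zero_mem' := fun y hy => by simp
  smul_mem' := fun c f hf y hy => by simp [MvPolynomial.smul_eval, hf y hy]

/-- `S_d`: the degree-`d` weighted-homogeneous piece (weights `1, a, b`). -/
def Sd (a b d : ℕ) : Submodule F (MvPolynomial (Fin 3) F) :=
  weightedHomogeneousSubmodule F ![1, a, b] d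

/-- `I_d`: the degree-`d` piece of the vanishing ideal of `ℙ(1,a,b)(F_q)`. -/
def Id' (a b d : ℕ) : Submodule F (MvPolynomial (Fin 3) F) := Sd F a b d ⊓ vanishing F

/-- The Hilbert function `H_Y(d) = dim S_d − dim I_d` of `Y = ℙ(1,a,b)(F_q)`. -/
def HY (a b d : ℕ) : ℕ :=
  Module.finrank F ↥(Sd F a b d) - Module.finrank F ↥(Id' F a b d)



def rho (c : ℕ) : ℕ → ℕ
  | 0 => 0
  | m + 1 => m % c + 1

lemma rho_eq_zero_iff {c m : ℕ} : rho c m = 0 ↔ m = 0 := by cases m <;> simp [rho]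

lemma rho_le {c : ℕ} (hc : 0 < c) (m : ℕ) : rho c m ≤ c := by
  cases m with
  | zero => simp [rho]
  | succ n => simpa [rho] using Nat.mod_lt n hc

lemma exists_rho (c m : ℕ) : ∃ k, m = rho c m + c * k := by
  cases m with
  | zero => exact ⟨0, rfl⟩
  | succ n =>
    refine ⟨n / c, ?_⟩
    simp only [rho]
    have := Nat.mod_add_div n c
    omega

lemma rho_fixed {c m : ℕ} (hm : m ≤ c) : rho c m = m := by
  cases m with
  | zero => rfl
  | succ n =>
    simp only [rho]
    have : n % c = n := Nat.mod_eq_of_lt (by omega)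
    omega

lemma rho_add_mul {c m : ℕ} (hm1 : 1 ≤ m) (hm : m ≤ c) (k : ℕ) :
    rho c (m + c * k) = m := by
  obtain ⟨n, rfl⟩ := Nat.exists_eq_add_of_le hm1
  have h : 1 + n + c * k = (n + c * k) + 1 := by omega
  rw [h]
  simp only [rho]
  have h2 : (n + c * k) % c = n % c := by simp [Nat.add_mul_mod_self_left]
  rw [h2, Nat.mod_eq_of_lt (by omega)]
  omega

def InR (c a b d : ℕ) (t : ℕ × ℕ × ℕ) : Prop :=
  ∃ m1 m2 m3 : ℕ, m1 + a * m2 + b * m3 = d ∧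
    rho c m1 = t.1 ∧ rho c m2 = t.2.1 ∧ rho c m3 = t.2.2

open Classical in
/-- the set of reduced exponent triples realizable in weighted degree `d`. -/
def Rset (c a b d : ℕ) : Finset (ℕ × ℕ × ℕ) :=
  ((Finset.range (c + 1)) ×ˢ (Finset.range (c + 1)) ×ˢ (Finset.range (c + 1))).filter
    (InR c a b d)

lemma InR_zero_iff {c a b d : ℕ} : InR c a b d (0, 0, 0) ↔ d = 0 := by
  constructor
  · rintro ⟨m1, m2, m3, hsum, h1, h2, h3⟩
    simp only at h1 h2 h3
    rw [rho_eq_zero_iff] at h1 h2 h3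
    simp [h1, h2, h3] at hsum
    omega
  · rintro rfl
    exact ⟨0, 0, 0, by simp, rfl, rfl, rfl⟩

lemma InR_plus_iff {c a b d i j k : ℕ} (hi : i + 1 ≤ c) (hj : j ≤ c) (hk : k ≤ c) :
    InR c a b d (i + 1, j, k) ↔
      (i + 1) + a * j + b * k ≤ d ∧ c ∣ (d - ((i + 1) + a * j + b * k)) := by
  constructor
  · rintro ⟨m1, m2, m3, hsum, h1, h2, h3⟩
    simp only at h1 h2 h3
    obtain ⟨k1, hk1⟩ := exists_rho c m1
    obtain ⟨k2, hk2⟩ := exists_rho c m2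
    obtain ⟨k3, hk3⟩ := exists_rho c m3
    rw [h1] at hk1; rw [h2] at hk2; rw [h3] at hk3
    have key : d = ((i + 1) + a * j + b * k) + c * (k1 + a * k2 + b * k3) := by
      rw [← hsum, hk1, hk2, hk3]; ring
    exact ⟨by omega, ⟨k1 + a * k2 + b * k3, by omega⟩⟩
  · rintro ⟨hle, K, hK⟩
    refine ⟨(i + 1) + c * K, j, k, ?_, ?_, ?_, ?_⟩
    · have : (i + 1 + c * K) + a * j + b * k = ((i + 1) + a * j + b * k) + c * K := by ring
      omega
    · exact rho_add_mul (by omega) hi K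
    · exact rho_fixed hj
    · exact rho_fixed hk

lemma InR_a_iff {c a b d j : ℕ} (hj : j + 1 ≤ c) :
    InR c a b d (0, j + 1, 0) ↔ a * (j + 1) ≤ d ∧ c * a ∣ (d - a * (j + 1)) := by
  constructor
  · rintro ⟨m1, m2, m3, hsum, h1, h2, h3⟩
    simp only at h1 h2 h3
    rw [rho_eq_zero_iff] at h1 h3
    obtain ⟨k2, hk2⟩ := exists_rho c m2
    rw [h2] at hk2
    have key : d = a * (j + 1) + (c * a) * k2 := by
      rw [← hsum, hk2, h1, h3]; ring
    exact ⟨by omega, ⟨k2, by omega⟩⟩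
  · rintro ⟨hle, K, hK⟩
    refine ⟨0, (j + 1) + c * K, 0, ?_, rfl, ?_, rfl⟩
    · have : 0 + a * (j + 1 + c * K) + b * 0 = a * (j + 1) + (c * a) * K := by ring
      omega
    · exact rho_add_mul (by omega) hj K

lemma InR_b_iff {c a b d k : ℕ} (hk : k + 1 ≤ c) :
    InR c a b d (0, 0, k + 1) ↔ b * (k + 1) ≤ d ∧ c * b ∣ (d - b * (k + 1)) := by
  constructor
  · rintro ⟨m1, m2, m3, hsum, h1, h2, h3⟩
    simp only at h1 h2 h3
    rw [rho_eq_zero_iff] at h1 h2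
    obtain ⟨k3, hk3⟩ := exists_rho c m3
    rw [h3] at hk3
    have key : d = b * (k + 1) + (c * b) * k3 := by
      rw [← hsum, hk3, h1, h2]; ring
    exact ⟨by omega, ⟨k3, by omega⟩⟩
  · rintro ⟨hle, K, hK⟩
    refine ⟨0, 0, (k + 1) + c * K, ?_, rfl, rfl, ?_⟩
    · have : 0 + a * 0 + b * (k + 1 + c * K) = b * (k + 1) + (c * b) * K := by ring
      omega
    · exact rho_add_mul (by omega) hk K

lemma InR_ab_iff {c a b d j k : ℕ} (hj : j + 1 ≤ c) (hk : k + 1 ≤ c) :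
    InR c a b d (0, j + 1, k + 1) ↔
      a * (j + 1) + b * (k + 1) ≤ d ∧
        ∃ u v : ℕ, d - (a * (j + 1) + b * (k + 1)) = c * a * u + c * b * v := by
  constructor
  · rintro ⟨m1, m2, m3, hsum, h1, h2, h3⟩
    simp only at h1 h2 h3
    rw [rho_eq_zero_iff] at h1
    obtain ⟨u, hu⟩ := exists_rho c m2
    obtain ⟨v, hv⟩ := exists_rho c m3
    rw [h2] at hu; rw [h3] at hv
    have key : d = (a * (j + 1) + b * (k + 1)) + (c * a * u + c * b * v) := by
      rw [← hsum, hu, hv, h1]; ring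
    exact ⟨by omega, u, v, by omega⟩
  · rintro ⟨hle, u, v, huv⟩
    refine ⟨0, (j + 1) + c * u, (k + 1) + c * v, ?_, rfl, ?_, ?_⟩
    · have : 0 + a * (j + 1 + c * u) + b * (k + 1 + c * v) =
        (a * (j + 1) + b * (k + 1)) + (c * a * u + c * b * v) := by ring
      omega
    · exact rho_add_mul (by omega) hj u
    · exact rho_add_mul (by omega) hk v

section PS
open PowerSeries

local notation "PX" => (PowerSeries.X : PowerSeries ℤ)

lemma coeff_pow_mul_mk (n : ℕ) (f : ℕ → ℤ) (d : ℕ) :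
    (PowerSeries.coeff d) (PX ^ n * PowerSeries.mk f) =
      if n ≤ d then f (d - n) else 0 := by
  rw [mul_comm, PowerSeries.coeff_mul_X_pow']
  split_ifs <;> simp

/-- indicator series of multiples of `k` -/
def Hdvd (k : ℕ) : PowerSeries ℤ := PowerSeries.mk fun d => if k ∣ d then 1 else 0

lemma one_sub_pow_mul_Hdvd {k : ℕ} (hk : 0 < k) : (1 - PX ^ k) * Hdvd k = 1 := by
  have expand : (1 - PX ^ k) * Hdvd k = Hdvd k - PX ^ k * Hdvd k := by ring
  ext d
  rw [expand, map_sub, Hdvd, coeff_pow_mul_mk, PowerSeries.coeff_mk, PowerSeries.coeff_one]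
  rcases Nat.eq_zero_or_pos d with rfl | hd
  · have h0 : ¬ k ≤ 0 := by omega
    simp [h0]
  · have hd0 : ¬ d = 0 := by omega
    simp only [hd0, if_false]
    by_cases hdvd : k ∣ d
    · have hkd : k ≤ d := Nat.le_of_dvd hd hdvd
      have h2 : k ∣ d - k := Nat.dvd_sub hdvd dvd_rfl
      simp [hdvd, hkd, h2]
    · have h3 : k ≤ d → ¬ k ∣ d - k := by
        intro h1 h2
        obtain ⟨u, hu⟩ := h2
        have hd' : d = k + k * u := by omega
        exact hdvd ⟨u + 1, by rw [hd']; ring⟩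
      rw [if_neg hdvd]
      split_ifs with h1 h2
      · exact absurd h2 (h3 h1)
      · simp
      · simp

open Classical in
/-- indicator series of the numerical set `{A*i + B*j}`. -/
def Hab (A B : ℕ) : PowerSeries ℤ :=
  PowerSeries.mk fun d => if ∃ i j : ℕ, d = A * i + B * j then 1 else 0

lemma Hab_eq {a b c : ℕ} (ha : 0 < a) (hc : 0 < c) (hab : Nat.gcd a b = 1) :
    (∑ j ∈ Finset.range a, PX ^ (c * b * j)) * Hdvd (c * a) = Hab (c * a) (c * b) := by
  ext d
  rw [Finset.sum_mul, map_sum, Hab, PowerSeries.coeff_mk]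
  simp only [Hdvd, coeff_pow_mul_mk]
  by_cases hex : ∃ i j : ℕ, d = c * a * i + c * b * j
  · rw [if_pos hex]
    obtain ⟨i, j, hij⟩ := hex
    have hj0 : j % a < a := Nat.mod_lt _ ha
    have hd : d = c * a * (i + b * (j / a)) + c * b * (j % a) := by
      have hja : j = a * (j / a) + j % a := (Nat.div_add_mod j a).symm
      rw [hij]
      calc c * a * i + c * b * j = c * a * i + c * b * (a * (j / a) + j % a) := by rw [← hja]
        _ = c * a * (i + b * (j / a)) + c * b * (j % a) := by ring
    rw [Finset.sum_eq_single_of_mem (j % a) (Finset.mem_range.mpr hj0)]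
    · have h1 : c * b * (j % a) ≤ d := by omega
      have h2 : c * a ∣ d - c * b * (j % a) := ⟨i + b * (j / a), by omega⟩
      simp [h1, h2]
    · intro j1 hj1 hne
      split_ifs with h1 h2
      · exfalso
        obtain ⟨i1, hi1⟩ := h2
        have hd1 : d = c * a * i1 + c * b * j1 := by omega
        have m1 : d % (c * a) = (c * b * j1) % (c * a) := by
          rw [hd1, add_comm]; exact Nat.add_mul_mod_self_left _ _ _
        have m0 : d % (c * a) = (c * b * (j % a)) % (c * a) := by
          rw [hd, add_comm]; exact Nat.add_mul_mod_self_left _ _ _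
        have key : (c * (b * j1)) % (c * a) = (c * (b * (j % a))) % (c * a) := by
          rw [← mul_assoc, ← mul_assoc]; omega
        rw [Nat.mul_mod_mul_left, Nat.mul_mod_mul_left] at key
        have key2 : (b * j1) % a = (b * (j % a)) % a := Nat.eq_of_mul_eq_mul_left hc key
        have key3 : j1 % a = (j % a) % a :=
          Nat.ModEq.cancel_left_of_coprime hab key2
        rw [Nat.mod_eq_of_lt (Finset.mem_range.mp hj1), Nat.mod_eq_of_lt hj0] at key3
        exact hne key3
      · rfl
      · rfl
  · rw [if_neg hex]
    apply Finset.sum_eq_zero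
    intro j1 _
    split_ifs with h1 h2
    · exfalso
      obtain ⟨i1, hi1⟩ := h2
      exact hex ⟨i1, j1, by omega⟩
    · rfl
    · rfl

lemma one_sub_mul_geom (x : PowerSeries ℤ) (n : ℕ) :
    (1 - x) * ∑ i ∈ Finset.range n, x ^ i = 1 - x ^ n := by
  linear_combination -(geom_sum_mul x n)

lemma mul_mul_Hab {a b c : ℕ} (ha : 0 < a) (hb : 0 < b) (hc : 0 < c)
    (hab : Nat.gcd a b = 1) :
    (1 - PX ^ (c * a)) * (1 - PX ^ (c * b)) * Hab (c * a) (c * b) = 1 - PX ^ (c * a * b) := by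
  rw [← Hab_eq ha hc hab]
  have hpow : ∀ j : ℕ, PX ^ (c * b * j) = (PX ^ (c * b)) ^ j := fun j => by
    rw [← pow_mul]
  have hgeom : (1 - PX ^ (c * b)) * (∑ j ∈ Finset.range a, PX ^ (c * b * j)) =
      1 - PX ^ (c * a * b) := by
    calc (1 - PX ^ (c * b)) * (∑ j ∈ Finset.range a, PX ^ (c * b * j))
        = (1 - PX ^ (c * b)) * (∑ j ∈ Finset.range a, (PX ^ (c * b)) ^ j) := by
          rw [Finset.sum_congr rfl fun j _ => hpow j]
      _ = 1 - (PX ^ (c * b)) ^ a := one_sub_mul_geom _ _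
      _ = 1 - PX ^ (c * a * b) := by rw [← pow_mul]; congr 1; ring
  calc (1 - PX ^ (c * a)) * (1 - PX ^ (c * b)) *
        ((∑ j ∈ Finset.range a, PX ^ (c * b * j)) * Hdvd (c * a))
      = ((1 - PX ^ (c * b)) * ∑ j ∈ Finset.range a, PX ^ (c * b * j)) *
          ((1 - PX ^ (c * a)) * Hdvd (c * a)) := by ring
    _ = ((1 - PX ^ (c * b)) * ∑ j ∈ Finset.range a, PX ^ (c * b * j)) * 1 := by
        rw [one_sub_pow_mul_Hdvd (by positivity)]
    _ = 1 - PX ^ (c * a * b) := by rw [mul_one, hgeom]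

open Classical in
/-- indicator power series of `{d | InR c a b d t}`. -/
def ind (c a b : ℕ) (t : ℕ × ℕ × ℕ) : PowerSeries ℤ :=
  PowerSeries.mk fun d => if InR c a b d t then 1 else 0

lemma ind_zero (c a b : ℕ) : ind c a b (0, 0, 0) = 1 := by
  ext d
  rw [ind, PowerSeries.coeff_mk, PowerSeries.coeff_one]
  rcases eq_or_ne d 0 with rfl | h
  · rw [if_pos (InR_zero_iff.mpr rfl), if_pos rfl]
  · rw [if_neg (fun hh => h (InR_zero_iff.mp hh)), if_neg h]

lemma ind_plus {c i j k : ℕ} (a b : ℕ) (hi : i + 1 ≤ c) (hj : j ≤ c) (hk : k ≤ c) :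
    ind c a b (i + 1, j, k) = PX ^ ((i + 1) + a * j + b * k) * Hdvd c := by
  ext d
  rw [ind, PowerSeries.coeff_mk, Hdvd, coeff_pow_mul_mk]
  by_cases h1 : (i + 1) + a * j + b * k ≤ d
  · simp [InR_plus_iff hi hj hk, h1]
  · simp [InR_plus_iff hi hj hk, h1]

lemma ind_a {c j : ℕ} (a b : ℕ) (hj : j + 1 ≤ c) :
    ind c a b (0, j + 1, 0) = PX ^ (a * (j + 1)) * Hdvd (c * a) := by
  ext d
  rw [ind, PowerSeries.coeff_mk, Hdvd, coeff_pow_mul_mk]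
  by_cases h1 : a * (j + 1) ≤ d
  · simp [InR_a_iff hj, h1]
  · simp [InR_a_iff hj, h1]

lemma ind_b {c k : ℕ} (a b : ℕ) (hk : k + 1 ≤ c) :
    ind c a b (0, 0, k + 1) = PX ^ (b * (k + 1)) * Hdvd (c * b) := by
  ext d
  rw [ind, PowerSeries.coeff_mk, Hdvd, coeff_pow_mul_mk]
  by_cases h1 : b * (k + 1) ≤ d
  · simp [InR_b_iff hk, h1]
  · simp [InR_b_iff hk, h1]

lemma ind_ab {c j k : ℕ} (a b : ℕ) (hj : j + 1 ≤ c) (hk : k + 1 ≤ c) :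
    ind c a b (0, j + 1, k + 1) =
      PX ^ (a * (j + 1) + b * (k + 1)) * Hab (c * a) (c * b) := by
  ext d
  rw [ind, PowerSeries.coeff_mk, Hab, coeff_pow_mul_mk]
  rw [InR_ab_iff hj hk]
  by_cases h1 : a * (j + 1) + b * (k + 1) ≤ d
  · rw [if_pos h1, and_iff_right h1]
  · rw [if_neg h1, if_neg (fun h => h1 h.1)]

lemma series_eq (c a b : ℕ) :
    PowerSeries.mk (fun d => ((Rset c a b d).card : ℤ)) =
      ∑ t ∈ (Finset.range (c + 1) ×ˢ Finset.range (c + 1) ×ˢ Finset.range (c + 1)),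
        ind c a b t := by
  ext d
  rw [PowerSeries.coeff_mk, map_sum]
  simp only [ind, PowerSeries.coeff_mk]
  rw [Rset, Finset.card_filter, Nat.cast_sum]
  exact Finset.sum_congr rfl fun t _ => by split_ifs <;> simp

lemma geom_w (w n : ℕ) :
    (1 - PX ^ w) * ∑ j ∈ Finset.range n, PX ^ (w * j) = 1 - PX ^ (w * n) := by
  have h : ∀ j : ℕ, PX ^ (w * j) = (PX ^ w) ^ j := fun j => by rw [← pow_mul]
  rw [Finset.sum_congr rfl fun j _ => h j, one_sub_mul_geom, ← pow_mul]

lemma shift_w (w n : ℕ) :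
    ∑ j ∈ Finset.range n, PX ^ (w * (j + 1)) =
      PX ^ w * ∑ j ∈ Finset.range n, PX ^ (w * j) := by
  rw [Finset.mul_sum]
  refine Finset.sum_congr rfl fun j _ => ?_
  rw [← pow_add]
  congr 1
  ring

theorem keyPS {c a b : ℕ} (hc : 0 < c) (ha : 0 < a) (hb : 0 < b) (hab : Nat.gcd a b = 1) :
    (1 - PX) * (1 - PX ^ a) * (1 - PX ^ b) *
        PowerSeries.mk (fun d => ((Rset c a b d).card : ℤ)) =
      1 - PX ^ ((c + 1) * a + 1) - PX ^ ((c + 1) * b + 1) - PX ^ (c * a * b + a + b)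
        + PX ^ ((c + 1) * a + (c + 1) * b + 1) + PX ^ (c * a * b + a + b + 1) := by
  rw [series_eq]
  rw [Finset.sum_product]
  simp only [Finset.sum_product]
  have hz0 : ∑ z ∈ Finset.range (c + 1), ind c a b (0, 0, z) =
      1 + (∑ k ∈ Finset.range c, PX ^ (b * (k + 1))) * Hdvd (c * b) := by
    rw [Finset.sum_range_succ', ind_zero]
    rw [Finset.sum_congr rfl (fun k hk => ind_b a b (Finset.mem_range.mp hk))]
    rw [← Finset.sum_mul]
    ring
  have hz1 : ∀ j ∈ Finset.range c, ∑ z ∈ Finset.range (c + 1), ind c a b (0, j + 1, z) =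
      PX ^ (a * (j + 1)) *
        (Hdvd (c * a) +
          (∑ k ∈ Finset.range c, PX ^ (b * (k + 1))) * Hab (c * a) (c * b)) := by
    intro j hj
    have hjc : j + 1 ≤ c := Finset.mem_range.mp hj
    rw [Finset.sum_range_succ', ind_a a b hjc]
    rw [Finset.sum_congr rfl (fun k hk => ind_ab a b hjc (Finset.mem_range.mp hk))]
    rw [Finset.sum_congr rfl (fun k _ => by rw [pow_add, mul_assoc] :
      ∀ k ∈ Finset.range c, PX ^ (a * (j + 1) + b * (k + 1)) * Hab (c * a) (c * b) =
        PX ^ (a * (j + 1)) * (PX ^ (b * (k + 1)) * Hab (c * a) (c * b)))]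
    rw [← Finset.mul_sum, ← Finset.sum_mul]
    ring
  have hy : ∑ y ∈ Finset.range (c + 1), ∑ z ∈ Finset.range (c + 1), ind c a b (0, y, z) =
      1 + (∑ k ∈ Finset.range c, PX ^ (b * (k + 1))) * Hdvd (c * b) +
        (∑ j ∈ Finset.range c, PX ^ (a * (j + 1))) *
          (Hdvd (c * a) +
            (∑ k ∈ Finset.range c, PX ^ (b * (k + 1))) * Hab (c * a) (c * b)) := by
    rw [Finset.sum_range_succ', hz0, Finset.sum_congr rfl hz1, ← Finset.sum_mul]
    ring
  have hx : ∀ i ∈ Finset.range c,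
      ∑ y ∈ Finset.range (c + 1), ∑ z ∈ Finset.range (c + 1), ind c a b (i + 1, y, z) =
        PX ^ (i + 1) * ((∑ y ∈ Finset.range (c + 1), PX ^ (a * y)) *
          ((∑ z ∈ Finset.range (c + 1), PX ^ (b * z)) * Hdvd c)) := by
    intro i hi
    have hic : i + 1 ≤ c := Finset.mem_range.mp hi
    have step : ∀ y ∈ Finset.range (c + 1),
        ∑ z ∈ Finset.range (c + 1), ind c a b (i + 1, y, z) =
          PX ^ (i + 1) * (PX ^ (a * y) * ((∑ z ∈ Finset.range (c + 1), PX ^ (b * z)) *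
            Hdvd c)) := by
      intro y hy'
      have hyc : y ≤ c := by have := Finset.mem_range.mp hy'; omega
      have inner : ∀ z ∈ Finset.range (c + 1),
          ind c a b (i + 1, y, z) =
            PX ^ (i + 1) * (PX ^ (a * y) * (PX ^ (b * z) * Hdvd c)) := by
        intro z hz'
        have hzc : z ≤ c := by have := Finset.mem_range.mp hz'; omega
        rw [ind_plus a b hic hyc hzc, pow_add, pow_add]
        ring
      rw [Finset.sum_congr rfl inner, ← Finset.mul_sum, ← Finset.mul_sum, ← Finset.sum_mul]
    rw [Finset.sum_congr rfl step, ← Finset.mul_sum, ← Finset.sum_mul]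
  rw [Finset.sum_range_succ', hy, Finset.sum_congr rfl hx, ← Finset.sum_mul]
  -- now pure algebra
  have g1 : (1 - PX) * ∑ i ∈ Finset.range c, PX ^ (i + 1) = PX * (1 - PX ^ c) := by
    have h1 : ∀ i : ℕ, (PX : PowerSeries ℤ) ^ (i + 1) = PX ^ (1 * (i + 1)) := fun i => by
      rw [one_mul]
    rw [Finset.sum_congr rfl fun i _ => h1 i, shift_w,
      show (1 : PowerSeries ℤ) - PX = 1 - PX ^ 1 from by rw [pow_one], mul_left_comm, geom_w,
      pow_one, one_mul]
  have g2 : (1 - PX ^ a) * ∑ j ∈ Finset.range c, PX ^ (a * (j + 1)) =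
      PX ^ a * (1 - PX ^ (a * c)) := by
    rw [shift_w, mul_left_comm, geom_w]
  have g3 : (1 - PX ^ b) * ∑ k ∈ Finset.range c, PX ^ (b * (k + 1)) =
      PX ^ b * (1 - PX ^ (b * c)) := by
    rw [shift_w, mul_left_comm, geom_w]
  have g4 : (1 - PX ^ a) * ∑ y ∈ Finset.range (c + 1), PX ^ (a * y) =
      1 - PX ^ (a * (c + 1)) := geom_w a (c + 1)
  have g5 : (1 - PX ^ b) * ∑ z ∈ Finset.range (c + 1), PX ^ (b * z) =
      1 - PX ^ (b * (c + 1)) := geom_w b (c + 1)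
  have g6 : (1 - PX ^ c) * Hdvd c = 1 := one_sub_pow_mul_Hdvd hc
  have g7 : (1 - PX ^ (c * a)) * Hdvd (c * a) = 1 := one_sub_pow_mul_Hdvd (by positivity)
  have g8 : (1 - PX ^ (c * b)) * Hdvd (c * b) = 1 := one_sub_pow_mul_Hdvd (by positivity)
  have g9 := mul_mul_Hab ha hb hc hab
  have t5 : (1 - PX) * (1 - PX ^ a) * (1 - PX ^ b) *
      ((∑ i ∈ Finset.range c, PX ^ (i + 1)) *
        ((∑ y ∈ Finset.range (c + 1), PX ^ (a * y)) *
          ((∑ z ∈ Finset.range (c + 1), PX ^ (b * z)) * Hdvd c))) =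
      PX * (1 - PX ^ (a * (c + 1))) * (1 - PX ^ (b * (c + 1))) := by
    calc (1 - PX) * (1 - PX ^ a) * (1 - PX ^ b) *
        ((∑ i ∈ Finset.range c, PX ^ (i + 1)) *
          ((∑ y ∈ Finset.range (c + 1), PX ^ (a * y)) *
            ((∑ z ∈ Finset.range (c + 1), PX ^ (b * z)) * Hdvd c)))
        = ((1 - PX) * ∑ i ∈ Finset.range c, PX ^ (i + 1)) *
            ((1 - PX ^ a) * ∑ y ∈ Finset.range (c + 1), PX ^ (a * y)) *
            ((1 - PX ^ b) * ∑ z ∈ Finset.range (c + 1), PX ^ (b * z)) * Hdvd c := by ring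
      _ = PX * (1 - PX ^ c) * (1 - PX ^ (a * (c + 1))) * (1 - PX ^ (b * (c + 1))) *
            Hdvd c := by rw [g1, g4, g5]
      _ = PX * (1 - PX ^ (a * (c + 1))) * (1 - PX ^ (b * (c + 1))) *
            ((1 - PX ^ c) * Hdvd c) := by ring
      _ = PX * (1 - PX ^ (a * (c + 1))) * (1 - PX ^ (b * (c + 1))) := by rw [g6, mul_one]
  have t2 : (1 - PX ^ a) * ((∑ j ∈ Finset.range c, PX ^ (a * (j + 1))) * Hdvd (c * a)) =
      PX ^ a := by
    calc (1 - PX ^ a) * ((∑ j ∈ Finset.range c, PX ^ (a * (j + 1))) * Hdvd (c * a))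
        = ((1 - PX ^ a) * ∑ j ∈ Finset.range c, PX ^ (a * (j + 1))) * Hdvd (c * a) := by
          ring
      _ = PX ^ a * ((1 - PX ^ (c * a)) * Hdvd (c * a)) := by rw [g2, mul_comm a c]; ring
      _ = PX ^ a := by rw [g7, mul_one]
  have t3 : (1 - PX ^ b) * ((∑ k ∈ Finset.range c, PX ^ (b * (k + 1))) * Hdvd (c * b)) =
      PX ^ b := by
    calc (1 - PX ^ b) * ((∑ k ∈ Finset.range c, PX ^ (b * (k + 1))) * Hdvd (c * b))
        = ((1 - PX ^ b) * ∑ k ∈ Finset.range c, PX ^ (b * (k + 1))) * Hdvd (c * b) := by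
          ring
      _ = PX ^ b * ((1 - PX ^ (c * b)) * Hdvd (c * b)) := by rw [g3, mul_comm b c]; ring
      _ = PX ^ b := by rw [g8, mul_one]
  have t4 : (1 - PX ^ a) * (1 - PX ^ b) *
      ((∑ j ∈ Finset.range c, PX ^ (a * (j + 1))) *
        ((∑ k ∈ Finset.range c, PX ^ (b * (k + 1))) * Hab (c * a) (c * b))) =
      PX ^ a * PX ^ b * (1 - PX ^ (c * a * b)) := by
    calc (1 - PX ^ a) * (1 - PX ^ b) *
        ((∑ j ∈ Finset.range c, PX ^ (a * (j + 1))) *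
          ((∑ k ∈ Finset.range c, PX ^ (b * (k + 1))) * Hab (c * a) (c * b)))
        = ((1 - PX ^ a) * ∑ j ∈ Finset.range c, PX ^ (a * (j + 1))) *
            ((1 - PX ^ b) * ∑ k ∈ Finset.range c, PX ^ (b * (k + 1))) *
            Hab (c * a) (c * b) := by ring
      _ = PX ^ a * PX ^ b *
            ((1 - PX ^ (c * a)) * (1 - PX ^ (c * b)) * Hab (c * a) (c * b)) := by
          rw [g2, g3, mul_comm a c, mul_comm b c]; ring
      _ = PX ^ a * PX ^ b * (1 - PX ^ (c * a * b)) := by rw [g9]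
  linear_combination t5 + (1 - PX) * (1 - PX ^ b) * t2 + (1 - PX) * (1 - PX ^ a) * t3 +
    (1 - PX) * t4

end PS


section PartA

variable (F : Type) [Field F] [Fintype F]

/-- the nonzero points of `F³`. -/
abbrev Ynz := {y : Fin 3 → F // y ≠ 0}

/-- evaluation at nonzero points, as a linear map. -/
def EvalY : MvPolynomial (Fin 3) F →ₗ[F] (Ynz F → F) where
  toFun p := fun y => eval y.1 p
  map_add' p q := by funext y; simp
  map_smul' r p := by funext y; simp [MvPolynomial.smul_eval]

lemma vanishing_eq_ker : vanishing F = LinearMap.ker (EvalY F) := by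
  ext p
  constructor
  · intro hp
    rw [LinearMap.mem_ker]
    funext y
    exact hp y.1 y.2
  · intro hp y hy
    exact congrFun (LinearMap.mem_ker.mp hp) ⟨y, hy⟩

lemma weight_eq (a b : ℕ) (m : Fin 3 →₀ ℕ) :
    Finsupp.weight ![1, a, b] m = m 0 + a * m 1 + b * m 2 := by
  rw [Finsupp.weight_apply, Finsupp.sum_fintype]
  · simp [Fin.sum_univ_three, smul_eq_mul, mul_comm]
  · intro i; rw [zero_smul]

lemma Sd_eq_span (a b d : ℕ) :
    Sd F a b d = Submodule.span F
      ((fun m : Fin 3 →₀ ℕ => (monomial m (1 : F))) ''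
        {m | Finsupp.weight ![1, a, b] m = d}) := by
  apply le_antisymm
  · intro p hp
    rw [Sd, mem_weightedHomogeneousSubmodule] at hp
    rw [← support_sum_monomial_coeff p]
    apply Submodule.sum_mem
    intro m hm
    have hw : Finsupp.weight ![1, a, b] m = d := hp (mem_support_iff.mp hm)
    have hmono : monomial m (coeff m p) = (coeff m p) • monomial m (1 : F) := by
      rw [smul_monomial, smul_eq_mul, mul_one]
    rw [hmono]
    exact Submodule.smul_mem _ _ (Submodule.subset_span ⟨m, hw, rfl⟩)
  · rw [Submodule.span_le]
    rintro p ⟨m, hm, rfl⟩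
    rw [SetLike.mem_coe, Sd, mem_weightedHomogeneousSubmodule]
    exact isWeightedHomogeneous_monomial _ _ _ hm

lemma Sd_fd (a b d : ℕ) (ha : 0 < a) (hb : 0 < b) :
    FiniteDimensional F ↥(Sd F a b d) := by
  rw [Sd_eq_span]
  apply FiniteDimensional.span_of_finite
  apply Set.Finite.image
  have hfin : {m : Fin 3 →₀ ℕ | Finsupp.weight ![1, a, b] m ≤ d}.Finite := by
    apply Finsupp.finite_of_nat_weight_le
    intro i
    fin_cases i <;> simp <;> omega
  exact hfin.subset fun m hm => le_of_eq hm

lemma HY_eq_rank (a b d : ℕ) (ha : 0 < a) (hb : 0 < b) :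
    HY F a b d = Module.finrank F ↥((Sd F a b d).map (EvalY F)) := by
  classical
  have _inst : FiniteDimensional F ↥(Sd F a b d) := Sd_fd F a b d ha hb
  set L := (EvalY F).comp (Sd F a b d).subtype with hL
  have hrange : LinearMap.range L = (Sd F a b d).map (EvalY F) := by
    rw [hL, LinearMap.range_comp, Submodule.range_subtype]
  have hker : LinearMap.ker L = Submodule.comap (Sd F a b d).subtype (Id' F a b d) := by
    rw [hL, LinearMap.ker_comp, Id', vanishing_eq_ker]
    ext x
    simp only [Submodule.mem_comap, Submodule.mem_inf, LinearMap.mem_ker]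
    exact ⟨fun h => ⟨x.2, h⟩, fun h => h.2⟩
  have e2 : Module.finrank F ↥(Submodule.comap (Sd F a b d).subtype (Id' F a b d)) =
      Module.finrank F ↥(Id' F a b d) :=
    (Submodule.comapSubtypeEquivOfLe (inf_le_left : Id' F a b d ≤ Sd F a b d)).finrank_eq
  have hrank := LinearMap.finrank_range_add_finrank_ker L
  rw [hrange, hker, e2] at hrank
  rw [HY]
  omega

/-- the function `y ↦ y₀^{t₁} y₁^{t₂} y₂^{t₃}` on nonzero points. -/
def Phi (t : ℕ × ℕ × ℕ) : Ynz F → F := fun y => y.1 0 ^ t.1 * y.1 1 ^ t.2.1 * y.1 2 ^ t.2.2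

lemma pow_rho (y : F) (m : ℕ) : y ^ m = y ^ rho (Fintype.card F - 1) m := by
  rcases Nat.eq_zero_or_pos m with rfl | hm
  · rfl
  · by_cases hy : y = 0
    · subst hy
      rw [zero_pow (by omega), zero_pow (by
        intro h; exact absurd (rho_eq_zero_iff.mp h) (by omega))]
    · obtain ⟨k, hk⟩ := exists_rho (Fintype.card F - 1) m
      conv_lhs => rw [hk]
      rw [pow_add, pow_mul, FiniteField.pow_card_sub_one_eq_one y hy, one_pow, mul_one]

lemma eval_monomial_eq (m : Fin 3 →₀ ℕ) :
    EvalY F (monomial m (1 : F)) =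
      Phi F (rho (Fintype.card F - 1) (m 0), rho (Fintype.card F - 1) (m 1),
        rho (Fintype.card F - 1) (m 2)) := by
  funext y
  show eval y.1 (monomial m 1) = _
  rw [eval_monomial, one_mul, Finsupp.prod_pow, Fin.prod_univ_three, Phi]
  rw [pow_rho F (y.1 0) (m 0), pow_rho F (y.1 1) (m 1), pow_rho F (y.1 2) (m 2)]

lemma map_Sd (a b d : ℕ) (ha : 0 < a) (hb : 0 < b) :
    (Sd F a b d).map (EvalY F) =
      Submodule.span F (Phi F '' ↑(Rset (Fintype.card F - 1) a b d)) := by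
  have hc1 : 0 < Fintype.card F - 1 := by
    have := Fintype.one_lt_card (α := F); omega
  classical
  rw [Sd_eq_span, Submodule.map_span]
  congr 1
  rw [Set.image_image]
  ext f
  constructor
  · rintro ⟨m, hm, rfl⟩
    refine ⟨(rho (Fintype.card F - 1) (m 0), rho (Fintype.card F - 1) (m 1),
      rho (Fintype.card F - 1) (m 2)), ?_, (eval_monomial_eq F m).symm⟩
    rw [Finset.mem_coe, Rset, Finset.mem_filter]
    have h0 := rho_le hc1 (m 0)
    have h1' := rho_le hc1 (m 1)
    have h2' := rho_le hc1 (m 2)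
    constructor
    · rw [Finset.mem_product, Finset.mem_product]
      exact ⟨Finset.mem_range.mpr (by dsimp only; omega),
        Finset.mem_range.mpr (by dsimp only; omega),
        Finset.mem_range.mpr (by dsimp only; omega)⟩
    · have hm' : Finsupp.weight ![1, a, b] m = d := hm
      rw [weight_eq] at hm'
      exact ⟨m 0, m 1, m 2, by omega, rfl, rfl, rfl⟩
  · rintro ⟨t, ht, rfl⟩
    rw [Finset.mem_coe, Rset, Finset.mem_filter] at ht
    obtain ⟨m1, m2, m3, hsum, h1, h2, h3⟩ := ht.2
    refine ⟨Finsupp.equivFunOnFinite.symm ![m1, m2, m3], ?_, ?_⟩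
    · show Finsupp.weight ![1, a, b] _ = d
      rw [weight_eq]
      simp only [Finsupp.coe_equivFunOnFinite_symm]
      simpa using hsum
    · dsimp only
      rw [eval_monomial_eq F]
      simp only [Finsupp.coe_equivFunOnFinite_symm]
      show Phi F (rho _ m1, rho _ m2, rho _ m3) = Phi F t
      rw [h1, h2, h3]

lemma phi_indep (s : Finset (ℕ × ℕ × ℕ))
    (hbd : ∀ t ∈ s, t.1 ≤ Fintype.card F - 1 ∧ t.2.1 ≤ Fintype.card F - 1 ∧
      t.2.2 ≤ Fintype.card F - 1)
    (h0 : ∀ t ∈ s, t ≠ (0, 0, 0)) :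
    LinearIndependent F (fun t : ↥s => Phi F ↑t) := by
  classical
  rw [Fintype.linearIndependent_iff]
  intro g hg
  set fsp : ℕ × ℕ × ℕ → (Fin 3 →₀ ℕ) :=
    fun t => Finsupp.equivFunOnFinite.symm ![t.1, t.2.1, t.2.2] with hfsp
  have fsp_apply : ∀ t : ℕ × ℕ × ℕ, (fsp t 0 = t.1 ∧ fsp t 1 = t.2.1 ∧ fsp t 2 = t.2.2) :=
    fun t => ⟨rfl, rfl, rfl⟩
  have fsp_inj : Function.Injective fsp := by
    intro u v h
    have h' : (![u.1, u.2.1, u.2.2] : Fin 3 → ℕ) = ![v.1, v.2.1, v.2.2] :=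
      Finsupp.equivFunOnFinite.symm.injective h
    have e0 := congrFun h' 0
    have e1 := congrFun h' 1
    have e2 := congrFun h' 2
    simp only [Matrix.cons_val_zero, Matrix.cons_val_one, Matrix.head_cons] at e0 e1 e2
    exact Prod.ext e0 (Prod.ext e1 e2)
  set P : MvPolynomial (Fin 3) F := ∑ t ∈ s.attach, g t • monomial (fsp ↑t) (1 : F) with hP
  have evalP : ∀ y : Fin 3 → F, eval y P = 0 := by
    intro y
    by_cases hy : y = 0
    · subst hy
      rw [hP, map_sum]
      apply Finset.sum_eq_zero
      intro t _
      rw [smul_eval, eval_monomial, one_mul, Finsupp.prod_pow, Fin.prod_univ_three]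
      obtain ⟨f0, f1, f2⟩ := fsp_apply (↑t : ℕ × ℕ × ℕ)
      have hne := h0 ↑t t.2
      have : (↑t : ℕ × ℕ × ℕ).1 ≠ 0 ∨ (↑t : ℕ × ℕ × ℕ).2.1 ≠ 0 ∨
          (↑t : ℕ × ℕ × ℕ).2.2 ≠ 0 := by
        by_contra hcon
        push_neg at hcon
        exact hne (Prod.ext hcon.1 (Prod.ext hcon.2.1 hcon.2.2))
      simp only [Pi.zero_apply]
      rcases this with h | h | h
      · rw [zero_pow (show (fsp ↑t) 0 ≠ 0 by rw [f0]; exact h)]; ring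
      · rw [zero_pow (show (fsp ↑t) 1 ≠ 0 by rw [f1]; exact h)]; ring
      · rw [zero_pow (show (fsp ↑t) 2 ≠ 0 by rw [f2]; exact h)]; ring
    · have := congrFun hg ⟨y, hy⟩
      simp only [Finset.sum_apply, Pi.smul_apply, Pi.zero_apply] at this
      rw [hP, map_sum]
      rw [← this]
      apply Finset.sum_congr rfl
      intro t _
      rw [smul_eval, eval_monomial, one_mul, Finsupp.prod_pow, Fin.prod_univ_three]
      obtain ⟨f0, f1, f2⟩ := fsp_apply (↑t : ℕ × ℕ × ℕ)
      rw [f0, f1, f2]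
      rfl
  have hPmem : P ∈ restrictDegree (Fin 3) F (Fintype.card F - 1) := by
    rw [hP]
    apply Submodule.sum_mem
    intro t _
    apply Submodule.smul_mem
    rw [mem_restrictDegree]
    intro sexp hs i
    rw [support_monomial, if_neg one_ne_zero, Finset.mem_singleton] at hs
    subst hs
    obtain ⟨b0, b1, b2⟩ := hbd ↑t t.2
    show (![(↑t : ℕ × ℕ × ℕ).1, (↑t : ℕ × ℕ × ℕ).2.1, (↑t : ℕ × ℕ × ℕ).2.2] : Fin 3 → ℕ) i ≤ _
    fin_cases i
    · exact b0
    · exact b1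
    · exact b2
  have hP0 : P = 0 := eq_zero_of_eval_eq_zero (Fin 3) F P evalP hPmem
  intro t
  have hcoeff : coeff (fsp ↑t) P = g t := by
    rw [hP, coeff_sum]
    rw [Finset.sum_eq_single t]
    · rw [coeff_smul, coeff_monomial, if_pos rfl, smul_eq_mul, mul_one]
    · intro t' _ hne
      rw [coeff_smul, coeff_monomial, if_neg, smul_zero]
      exact fun h => hne (Subtype.ext (fsp_inj h))
    · intro h; exact absurd (Finset.mem_attach _ _) h
  rw [hP0, coeff_zero] at hcoeff
  exact hcoeff.symm

lemma HY_eq_card (a b d : ℕ) (ha : 0 < a) (hb : 0 < b) :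
    HY F a b d = (Rset (Fintype.card F - 1) a b d).card := by
  classical
  have hc1 : 0 < Fintype.card F - 1 := by
    have := Fintype.one_lt_card (α := F); omega
  rw [HY_eq_rank F a b d ha hb, map_Sd F a b d ha hb]
  rcases Nat.eq_zero_or_pos d with rfl | hd
  · have hR : Rset (Fintype.card F - 1) a b 0 = {(0, 0, 0)} := by
      ext t
      rw [Rset, Finset.mem_filter, Finset.mem_singleton]
      constructor
      · rintro ⟨_, m1, m2, m3, hsum, h1, h2, h3⟩
        have hm1 : m1 = 0 := by omega
        have hm2 : m2 = 0 := by
          by_contra h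
          have : a * m2 ≥ a := Nat.le_mul_of_pos_right a (by omega)
          omega
        have hm3 : m3 = 0 := by
          by_contra h
          have : b * m3 ≥ b := Nat.le_mul_of_pos_right b (by omega)
          omega
        subst hm1; subst hm2; subst hm3
        rw [show rho (Fintype.card F - 1) 0 = 0 from rfl] at h1 h2 h3
        exact Prod.ext h1.symm (Prod.ext h2.symm h3.symm)
      · rintro rfl
        refine ⟨?_, 0, 0, 0, by simp, rfl, rfl, rfl⟩
        rw [Finset.mem_product, Finset.mem_product]
        refine ⟨Finset.mem_range.mpr ?_, Finset.mem_range.mpr ?_, Finset.mem_range.mpr ?_⟩ <;>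
          · show (0 : ℕ) < _
            omega
    rw [hR]
    have himg : Phi F '' ↑({((0 : ℕ), (0 : ℕ), (0 : ℕ))} : Finset (ℕ × ℕ × ℕ)) =
        {Phi F (0, 0, 0)} := by
      rw [Finset.coe_singleton, Set.image_singleton]
    rw [himg, Finset.card_singleton]
    have hy0 : ((fun _ => 1 : Fin 3 → F)) ≠ 0 := by
      intro h
      have := congrFun h 0
      simp at this
    have hphi : Phi F (0, 0, 0) ≠ 0 := by
      intro h
      have := congrFun h ⟨fun _ => 1, hy0⟩
      rw [Phi] at this
      simp at this
    exact finrank_span_singleton hphi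
  · have hbd : ∀ t ∈ Rset (Fintype.card F - 1) a b d,
        t.1 ≤ Fintype.card F - 1 ∧ t.2.1 ≤ Fintype.card F - 1 ∧
          t.2.2 ≤ Fintype.card F - 1 := by
      intro t ht
      rw [Rset, Finset.mem_filter, Finset.mem_product, Finset.mem_product] at ht
      obtain ⟨⟨u1, u2, u3⟩, -⟩ := ht
      rw [Finset.mem_range] at u1 u2 u3
      omega
    have h0 : ∀ t ∈ Rset (Fintype.card F - 1) a b d, t ≠ (0, 0, 0) := by
      intro t ht hcon
      subst hcon
      rw [Rset, Finset.mem_filter] at ht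
      exact absurd (InR_zero_iff.mp ht.2) (by omega)
    have hindep := phi_indep F (Rset (Fintype.card F - 1) a b d) hbd h0
    have hset : Phi F '' ↑(Rset (Fintype.card F - 1) a b d) =
        Set.range (fun t : ↥(Rset (Fintype.card F - 1) a b d) => Phi F ↑t) := by
      ext f
      constructor
      · rintro ⟨t, ht, rfl⟩
        exact ⟨⟨t, ht⟩, rfl⟩
      · rintro ⟨⟨t, ht⟩, rfl⟩
        exact ⟨t, ht, rfl⟩
    rw [hset, finrank_span_eq_card hindep]
    exact Fintype.card_coe _

end PartA


/-- Theorem (Hilbert series of `ℙ(1,a,b)(F_q)`):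
`(1−t)(1−t^a)(1−t^b)·Σ H_Y(d) t^d
  = 1 − t^{qa+1} − t^{qb+1} − t^{(q−1)ab+a+b} + t^{qa+qb+1} + t^{(q−1)ab+a+b+1}`. -/
theorem hilbert_series_P1ab (q : ℕ) (hq : q = Fintype.card F) (a b : ℕ)
    (ha : 0 < a) (hb : 0 < b) (hab : Nat.gcd a b = 1) :
    (1 - PowerSeries.X) * (1 - PowerSeries.X ^ a) * (1 - PowerSeries.X ^ b) *
        PowerSeries.mk (fun d => (HY F a b d : ℤ)) =
      1 - PowerSeries.X ^ (q * a + 1) - PowerSeries.X ^ (q * b + 1)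
        - PowerSeries.X ^ ((q - 1) * a * b + a + b)
        + PowerSeries.X ^ (q * a + q * b + 1)
        + PowerSeries.X ^ ((q - 1) * a * b + a + b + 1) := by
  have hq2 : 1 < Fintype.card F := Fintype.one_lt_card
  set c := Fintype.card F - 1 with hc
  have hc0 : 0 < c := by omega
  have hq' : q = c + 1 := by omega
  have hq1 : q - 1 = c := by omega
  have hmk : PowerSeries.mk (fun d => (HY F a b d : ℤ)) =
      PowerSeries.mk (fun d => ((Rset c a b d).card : ℤ)) := by
    ext d
    rw [PowerSeries.coeff_mk, PowerSeries.coeff_mk, HY_eq_card F a b d ha hb]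
  rw [hmk, hq1, hq']
  exact keyPS hc0 ha hb hab

end
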